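/- Fix W a real symmetric N×N matrix, F ⊆ [1,N]² with W F-identifiable, and S⋆ = Supp(W). Define for S ⊆ F̄, c(S) = min over nonzero symmetric A supported in S of ‖A K − K A‖/‖A‖, where K is a symmetric matrix with exactly the same eigenspaces as W. Then c₀(S⋆) = min over supports S ≠ S⋆ with |S| ≤ |S⋆| of c(S) is strictly positive. -/
import Mathlib


open Matrix

attribute [local instance] Matrix.frobeniusNormedAddCommGroup Matrix.frobeniusNormedRing
attribute [local instance] Matrix.frobeniusNormedSpace

theorem c0_pos {N : ℕ}
    (W K : Matrix (Fin N) (Fin N) ℝ)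
    (hWsymm : W.IsSymm) (hKsymm : K.IsSymm)
    (F : Finset (Fin N × Fin N))
    (hWF : ∀ p ∈ F, W p.1 p.2 = 0)
    -- `K` has exactly the same eigenspaces as `W`
    (hsame : ∀ A : Matrix (Fin N) (Fin N) ℝ, A.IsSymm →
      (A * K = K * A ↔ A * W = W * A))
    -- `W` is `F`-identifiable
    (hid : ∀ A : Matrix (Fin N) (Fin N) ℝ, A.IsSymm →
      (∀ p ∈ F, A p.1 p.2 = 0) → A * W = W * A → ∃ t : ℝ, A = t • W)
    (Sstar : Finset (Fin N × Fin N))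
    (hSstar : ∀ p : Fin N × Fin N, p ∈ Sstar ↔ W p.1 p.2 ≠ 0) :
    ∃ c : ℝ, 0 < c ∧
      ∀ S : Finset (Fin N × Fin N), (∀ p ∈ S, p ∉ F) →
        S ≠ Sstar → S.card ≤ Sstar.card →
        ∀ A : Matrix (Fin N) (Fin N) ℝ, A ≠ 0 → A.IsSymm →
          (∀ p : Fin N × Fin N, p ∉ S → A p.1 p.2 = 0) →
          c ≤ ‖A * K - K * A‖ / ‖A‖ := by
  classical
  -- entry evaluation is continuous
  have heval : ∀ i j : Fin N, Continuous fun A : Matrix (Fin N) (Fin N) ℝ => A i j := by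
    intro i j
    have : (fun A : Matrix (Fin N) (Fin N) ℝ => A i j) =
        ({ toFun := fun A : Matrix (Fin N) (Fin N) ℝ => A i j,
           map_add' := fun _ _ => rfl,
           map_smul' := fun _ _ => rfl } : Matrix (Fin N) (Fin N) ℝ →ₗ[ℝ] ℝ) := rfl
    rw [this]
    exact LinearMap.continuous_of_finiteDimensional _
  have hg : Continuous fun A : Matrix (Fin N) (Fin N) ℝ => ‖A * K - K * A‖ :=
    ((continuous_id.mul continuous_const).sub (continuous_const.mul continuous_id)).norm
  -- scaling identity
  have hscale : ∀ (r : ℝ) (A : Matrix (Fin N) (Fin N) ℝ),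
      (r • A) * K - K * (r • A) = r • (A * K - K * A) := by
    intro r A
    rw [smul_mul_assoc, mul_smul_comm, smul_sub]
  -- per-support bound
  have key : ∀ S : Finset (Fin N × Fin N), ∃ c : ℝ, 0 < c ∧
      ((∀ p ∈ S, p ∉ F) → S ≠ Sstar → S.card ≤ Sstar.card →
        ∀ A : Matrix (Fin N) (Fin N) ℝ, A ≠ 0 → A.IsSymm →
          (∀ p : Fin N × Fin N, p ∉ S → A p.1 p.2 = 0) →
          c ≤ ‖A * K - K * A‖ / ‖A‖) := by
    intro S
    by_cases hS : (∀ p ∈ S, p ∉ F) ∧ S ≠ Sstar ∧ S.card ≤ Sstar.card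
    swap
    · exact ⟨1, one_pos, fun h1 h2 h3 => absurd ⟨h1, h2, h3⟩ hS⟩
    obtain ⟨hSF, hSne, hScard⟩ := hS
    set Q : Set (Matrix (Fin N) (Fin N) ℝ) :=
      {A | A.IsSymm ∧ (∀ p : Fin N × Fin N, p ∉ S → A p.1 p.2 = 0) ∧ ‖A‖ = 1} with hQ
    by_cases hQne : Q.Nonempty
    swap
    · refine ⟨1, one_pos, ?_⟩
      intro _ _ _ A hA0 hAsymm hAsupp
      exfalso
      apply hQne
      refine ⟨‖A‖⁻¹ • A, hAsymm.smul _, fun p hp => by simp [hAsupp p hp], ?_⟩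
      rw [norm_smul, norm_inv, norm_norm]
      exact inv_mul_cancel₀ (norm_ne_zero_iff.mpr hA0)
    -- compactness
    have hQclosed : IsClosed Q := by
      have h1 : IsClosed {A : Matrix (Fin N) (Fin N) ℝ | A.IsSymm} := by
        have : {A : Matrix (Fin N) (Fin N) ℝ | A.IsSymm} =
            ⋂ (i : Fin N) (j : Fin N), {A | A j i = A i j} := by
          ext A
          simp only [Set.mem_setOf_eq, Set.mem_iInter]
          constructor
          · intro h i j; exact congrFun (congrFun h i) j
          · intro h; ext i j; exact h i j
        rw [this]
        exact isClosed_iInter fun i => isClosed_iInter fun j =>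
          isClosed_eq (heval j i) (heval i j)
      have h2 : IsClosed {A : Matrix (Fin N) (Fin N) ℝ |
          ∀ p : Fin N × Fin N, p ∉ S → A p.1 p.2 = 0} := by
        have : {A : Matrix (Fin N) (Fin N) ℝ | ∀ p : Fin N × Fin N, p ∉ S → A p.1 p.2 = 0} =
            ⋂ (p : Fin N × Fin N) (_ : p ∉ S), {A | A p.1 p.2 = 0} := by
          ext A; simp [Set.mem_iInter]
        rw [this]
        exact isClosed_iInter fun p => isClosed_iInter fun _ =>
          isClosed_eq (heval p.1 p.2) continuous_const
      have h3 : IsClosed {A : Matrix (Fin N) (Fin N) ℝ | ‖A‖ = 1} :=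
        isClosed_eq continuous_norm continuous_const
      have : Q = {A : Matrix (Fin N) (Fin N) ℝ | A.IsSymm} ∩
          ({A | ∀ p : Fin N × Fin N, p ∉ S → A p.1 p.2 = 0} ∩ {A | ‖A‖ = 1}) := by
        ext A; simp [hQ, Set.mem_setOf_eq, and_assoc]
      rw [this]
      exact h1.inter (h2.inter h3)
    have hQbdd : Bornology.IsBounded Q := by
      apply Metric.isBounded_iff.mpr
      refine ⟨2, ?_⟩
      rintro x ⟨_, _, hx⟩ y ⟨_, _, hy⟩
      calc dist x y ≤ ‖x‖ + ‖y‖ := dist_le_norm_add_norm x y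
      _ = 2 := by rw [hx, hy]; norm_num
    have hQcpt : IsCompact Q := Metric.isCompact_of_isClosed_isBounded hQclosed hQbdd
    obtain ⟨A₀, hA₀Q, hmin⟩ := hQcpt.exists_isMinOn hQne hg.continuousOn
    obtain ⟨hA₀symm, hA₀supp, hA₀norm⟩ := hA₀Q
    have hcpos : 0 < ‖A₀ * K - K * A₀‖ := by
      rcases lt_or_eq_of_le (norm_nonneg (A₀ * K - K * A₀)) with h | h
      · exact h
      exfalso
      -- the minimizer commutes with K, hence with W, hence is a multiple of W
      have hcomm : A₀ * K = K * A₀ := sub_eq_zero.mp (norm_eq_zero.mp h.symm)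
      have hcommW : A₀ * W = W * A₀ := (hsame A₀ hA₀symm).mp hcomm
      have hAF : ∀ p ∈ F, A₀ p.1 p.2 = 0 := by
        intro p hp
        by_contra hne
        have hpS : p ∈ S := by
          by_contra hpS
          exact hne (hA₀supp p hpS)
        exact hSF p hpS hp
      obtain ⟨t, ht⟩ := hid A₀ hA₀symm hAF hcommW
      have ht0 : t ≠ 0 := by
        intro h0
        rw [h0, zero_smul] at ht
        rw [ht, norm_zero] at hA₀norm
        norm_num at hA₀norm
      have hsub : Sstar ⊆ S := by
        intro p hp
        by_contra hpS
        have : A₀ p.1 p.2 = 0 := hA₀supp p hpS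
        rw [ht] at this
        simp only [Matrix.smul_apply, smul_eq_mul] at this
        exact (hSstar p).mp hp (by
          rcases mul_eq_zero.mp this with h' | h'
          · exact absurd h' ht0
          · exact h')
      exact hSne (Finset.eq_of_subset_of_card_le hsub hScard).symm
    refine ⟨‖A₀ * K - K * A₀‖, hcpos, ?_⟩
    intro _ _ _ A hA0 hAsymm hAsupp
    have hAn : ‖A‖ ≠ 0 := norm_ne_zero_iff.mpr hA0
    have hBQ : (‖A‖⁻¹ • A) ∈ Q := by
      refine ⟨hAsymm.smul _, fun p hp => by simp [hAsupp p hp], ?_⟩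
      rw [norm_smul, norm_inv, norm_norm]
      exact inv_mul_cancel₀ hAn
    have := hmin hBQ
    simp only [Set.mem_setOf_eq] at this
    rw [hscale, norm_smul, norm_inv, norm_norm] at this
    rw [div_eq_inv_mul]
    exact this
  choose f hf₁ hf₂ using key
  have hne : (Finset.univ : Finset (Finset (Fin N × Fin N))).Nonempty := Finset.univ_nonempty
  refine ⟨Finset.univ.inf' hne f, ?_, ?_⟩
  · exact (Finset.lt_inf'_iff hne).mpr fun S _ => hf₁ S
  · intro S h1 h2 h3 A hA0 hAsymm hAsupp
    exact le_trans (Finset.inf'_le f (Finset.mem_univ S))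
      (hf₂ S h1 h2 h3 A hA0 hAsymm hAsupp)
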